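/- arXiv:1307.2863 — 3 statements merged into one kernel-verified Lean document; each statement's English description precedes it below -/
import Mathlib

section
/- If every path in a finite simple graph G has at most k vertices (k ≥ 1), then td(G) ≤ k. -/
/-- A rooted forest on the vertex set `V`, represented via its ancestor relation:
`anc u v` means that `u` is a (weak) ancestor of `v`, i.e. `u` lies on the path
from `v` to the root of its component tree.  The ancestor relation of a rooted
forest is a partial order in which the set of ancestors of any vertex is a chain. -/
structure RootedForest (V : Type*) where
  anc : V → V → Prop
  refl : ∀ v, anc v v
  antisymm : ∀ u v, anc u v → anc v u → u = v
  trans : ∀ u v w, anc u v → anc v w → anc u w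
  upChain : ∀ u v w, anc u w → anc v w → anc u v ∨ anc v u

/-- The closure `clos(F)` of a rooted forest `F`: the simple graph with an edge `xy`
whenever `x` is a strict ancestor of `y` or vice versa. -/
def RootedForest.closure {V : Type*} (F : RootedForest V) : SimpleGraph V where
  Adj u v := u ≠ v ∧ (F.anc u v ∨ F.anc v u)
  symm := ⟨fun _ _ h => ⟨Ne.symm h.1, h.2.symm⟩⟩
  loopless := ⟨fun _ h => h.1 rfl⟩

/-- A rooted forest has height at most `t` iff every path from a root to a leaf has
at most `t` vertices; equivalently, every chain in the ancestor order has at most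
`t` elements. -/
def RootedForest.HeightLE {V : Type*} (F : RootedForest V) (t : ℕ) : Prop :=
  ∀ s : Finset V, (∀ u ∈ s, ∀ v ∈ s, F.anc u v ∨ F.anc v u) → s.card ≤ t

/-- The tree-depth of a graph `G` : the least `t` such that `G` is a subgraph of the
closure of some rooted forest on `V(G)` of height at most `t`. -/
noncomputable def treeDepth {V : Type*} (G : SimpleGraph V) : ℕ :=
  sInf { t | ∃ F : RootedForest V, F.HeightLE t ∧ G ≤ F.closure }


open Finset

namespace TDProof

variable {V : Type*}

/-- In a nodup list, a suffix is determined by its head. -/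
lemma suffix_head_aux {α : Type*} {s₁ s₂ : List α} {a : α}
    (hnd : (a :: s₂).Nodup) (h : (a :: s₁) <:+ (a :: s₂)) : s₁ = s₂ := by
  rcases h with ⟨pre, hp⟩
  cases pre with
  | nil => simpa using hp
  | cons b pre' =>
    exfalso
    simp only [List.cons_append, List.cons.injEq] at hp
    obtain ⟨rfl, h2⟩ := hp
    have : b ∈ s₂ := by rw [← h2]; simp
    exact (List.nodup_cons.1 hnd).1 this

lemma suffix_head_unique {α : Type*} {l s₁ s₂ : List α} {a : α} (hl : l.Nodup)
    (h1 : (a :: s₁) <:+ l) (h2 : (a :: s₂) <:+ l) : s₁ = s₂ := by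
  rcases List.suffix_or_suffix_of_suffix h1 h2 with h | h
  · exact suffix_head_aux (h2.sublist.nodup hl) h
  · exact (suffix_head_aux (h1.sublist.nodup hl) h).symm

/-- The DFS invariant: `P` is the active path (current vertex first), `D` the set of
visited vertices, `A v` is the list of weak ancestors of `v` from `v` up to its root. -/
structure Inv (G : SimpleGraph V) (P : List V) (D : Finset V) (A : V → List V) : Prop where
  head : ∀ v ∈ D, ∃ t, A v = v :: t
  chn : ∀ v ∈ D, (A v).Chain' G.Adj
  nodup : ∀ v ∈ D, (A v).Nodup
  memD : ∀ v ∈ D, ∀ u ∈ A v, u ∈ D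
  suff : ∀ v ∈ D, ∀ u ∈ A v, A u <:+ A v
  pathD : ∀ u ∈ P, u ∈ D
  pathA : ∀ h t, P = h :: t → A h = h :: t
  fin : ∀ w ∈ D, w ∉ P → ∀ x, G.Adj w x → x ∈ D ∧ (w ∈ A x ∨ x ∈ A w)

lemma Inv.self_mem {G : SimpleGraph V} {P D A} (hI : Inv G P D A) {v} (hv : v ∈ D) :
    v ∈ A v := by
  obtain ⟨t, ht⟩ := hI.head v hv
  rw [ht]; exact List.mem_cons_self

/-- Popping the current vertex: if all neighbours of the head of the active path are
visited, the invariant holds with the head removed. -/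
lemma Inv.finish {G : SimpleGraph V} {h : V} {t : List V} {D A}
    (hI : Inv G (h :: t) D A) (hnb : ∀ w, G.Adj h w → w ∈ D) : Inv G t D A := by
  have hAh : A h = h :: t := hI.pathA h t rfl
  have hhD : h ∈ D := hI.pathD h (List.mem_cons_self)
  refine ⟨hI.head, hI.chn, hI.nodup, hI.memD, hI.suff, ?_, ?_, ?_⟩
  · intro u hu; exact hI.pathD u (List.mem_cons_of_mem _ hu)
  · rintro h' t' rfl
    have hm : h' ∈ A h := by rw [hAh]; simp
    have h1 : A h' <:+ A h := hI.suff h hhD h' hm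
    obtain ⟨s, hs⟩ := hI.head h' (hI.memD h hhD h' hm)
    rw [hs] at h1
    rw [hAh] at h1
    have h2 : (h' :: t') <:+ (h :: h' :: t') := ⟨[h], rfl⟩
    have hnd : (h :: h' :: t').Nodup := by rw [← hAh]; exact hI.nodup h hhD
    rw [hs, suffix_head_unique hnd h1 h2]
  · intro w hwD hwt x hadj
    by_cases hwh : w = h
    · subst hwh
      refine ⟨hnb x hadj, ?_⟩
      by_cases hxA : x ∈ A w
      · exact Or.inr hxA
      · have hxD : x ∈ D := hnb x hadj
        have hxP : x ∉ w :: t := by rw [← hAh]; exact hxA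
        have := (hI.fin x hxD hxP w hadj.symm).2
        rcases this with hc | hc
        · exact absurd hc hxA
        · exact Or.inl hc
    · have hwP : w ∉ h :: t := by
        simp only [List.mem_cons, not_or]; exact ⟨hwh, hwt⟩
      exact hI.fin w hwD hwP x hadj

/-- The recursive DFS step. -/
lemma visit [Fintype V] [DecidableEq V] (G : SimpleGraph V) :
    ∀ n (h : V) (t : List V) (D : Finset V) (A : V → List V),
      (Finset.univ \ D).card ≤ n → Inv G (h :: t) D A →
      ∃ D' A', D ⊆ D' ∧ (∀ v ∈ D, A' v = A v) ∧ Inv G t D' A' := by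
  intro n
  induction n with
  | zero =>
    intro h t D A hcard hI
    have hDuniv : ∀ w : V, w ∈ D := by
      intro w
      by_contra hw
      have : w ∈ Finset.univ \ D := by simp [hw]
      have := Finset.card_pos.2 ⟨w, this⟩
      omega
    exact ⟨D, A, le_rfl, fun _ _ => rfl, hI.finish (fun w _ => hDuniv w)⟩
  | succ n ih =>
    intro h t D A hcard hI
    by_cases hex : ∃ w, G.Adj h w ∧ w ∉ D
    · obtain ⟨w, hadj, hwD⟩ := hex
      have hAh : A h = h :: t := hI.pathA h t rfl
      have hhD : h ∈ D := hI.pathD h (List.mem_cons_self)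
      set A₁ : V → List V := Function.update A w (w :: h :: t) with hA₁
      set D₁ : Finset V := insert w D with hD₁
      have hA₁eq : ∀ v ∈ D, A₁ v = A v := by
        intro v hv
        have : v ≠ w := fun hvw => hwD (hvw ▸ hv)
        simp [hA₁, Function.update_of_ne this]
      have hA₁w : A₁ w = w :: h :: t := by simp [hA₁]
      have hwAh : w ∉ A h := fun hm => hwD (hI.memD h hhD w hm)
      have hI₁ : Inv G (w :: h :: t) D₁ A₁ := by
        refine ⟨?_, ?_, ?_, ?_, ?_, ?_, ?_, ?_⟩
        · intro v hv
          rcases Finset.mem_insert.1 hv with rfl | hv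
          · exact ⟨h :: t, hA₁w⟩
          · rw [hA₁eq v hv]; exact hI.head v hv
        · intro v hv
          rcases Finset.mem_insert.1 hv with rfl | hv
          · rw [hA₁w]
            show List.IsChain G.Adj (_ :: h :: t)
            rw [List.isChain_cons_cons]
            refine ⟨hadj.symm, ?_⟩
            rw [← hAh]; exact hI.chn h hhD
          · rw [hA₁eq v hv]; exact hI.chn v hv
        · intro v hv
          rcases Finset.mem_insert.1 hv with rfl | hv
          · rw [hA₁w, List.nodup_cons]
            refine ⟨by rw [← hAh]; exact hwAh, by rw [← hAh]; exact hI.nodup h hhD⟩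
          · rw [hA₁eq v hv]; exact hI.nodup v hv
        · intro v hv u hu
          rcases Finset.mem_insert.1 hv with rfl | hv
          · rw [hA₁w] at hu
            rcases List.mem_cons.1 hu with rfl | hu
            · exact Finset.mem_insert_self _ _
            · rw [← hAh] at hu
              exact Finset.mem_insert_of_mem (hI.memD h hhD u hu)
          · rw [hA₁eq v hv] at hu
            exact Finset.mem_insert_of_mem (hI.memD v hv u hu)
        · intro v hv u hu
          rcases Finset.mem_insert.1 hv with rfl | hv
          · rw [hA₁w] at hu ⊢
            rcases List.mem_cons.1 hu with rfl | hu
            · rw [hA₁w]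
            · rw [← hAh] at hu
              have huD : u ∈ D := hI.memD h hhD u hu
              rw [hA₁eq u huD]
              exact (hI.suff h hhD u hu).trans (by rw [hAh]; exact List.suffix_cons _ _)
          · rw [hA₁eq v hv] at hu ⊢
            have huD : u ∈ D := hI.memD v hv u hu
            rw [hA₁eq u huD]
            exact hI.suff v hv u hu
        · intro u hu
          rcases List.mem_cons.1 hu with rfl | hu
          · exact Finset.mem_insert_self _ _
          · rw [← hAh] at hu
            exact Finset.mem_insert_of_mem (hI.memD h hhD u hu)
        · rintro h' t' heq
          obtain ⟨rfl, rfl⟩ : h' = w ∧ t' = h :: t := by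
            injection heq with a b; exact ⟨a.symm, b.symm⟩
          exact hA₁w
        · intro v hv hvP x hadjx
          have hvw : v ≠ w := fun hvw => hvP (hvw ▸ List.mem_cons_self)
          have hvD : v ∈ D := (Finset.mem_insert.1 hv).resolve_left hvw
          have hvP' : v ∉ h :: t := fun hm => hvP (List.mem_cons_of_mem _ hm)
          obtain ⟨hxD, hcomp⟩ := hI.fin v hvD hvP' x hadjx
          have hxw : x ≠ w := fun hxw => hwD (hxw ▸ hxD)
          refine ⟨Finset.mem_insert_of_mem hxD, ?_⟩
          rw [hA₁eq x hxD, hA₁eq v hvD]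
          exact hcomp
      have hcard₁ : (Finset.univ \ D₁).card ≤ n := by
        have hss : Finset.univ \ D₁ ⊂ Finset.univ \ D := by
          refine Finset.ssubset_iff_of_subset (Finset.sdiff_subset_sdiff le_rfl
            (Finset.subset_insert _ _)) |>.2 ?_
          exact ⟨w, by simp [hD₁, hwD], by simp [hD₁]⟩
        have := Finset.card_lt_card hss
        omega
      obtain ⟨D₂, A₂, hD₁₂, hA₂eq, hI₂⟩ := ih w (h :: t) D₁ A₁ hcard₁ hI₁
      have hcard₂ : (Finset.univ \ D₂).card ≤ n :=
        le_trans (Finset.card_le_card (Finset.sdiff_subset_sdiff le_rfl hD₁₂)) hcard₁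
      obtain ⟨D₃, A₃, hD₂₃, hA₃eq, hI₃⟩ := ih h t D₂ A₂ hcard₂ hI₂
      refine ⟨D₃, A₃, ?_, ?_, hI₃⟩
      · exact le_trans (le_trans (Finset.subset_insert _ _) hD₁₂) hD₂₃
      · intro v hv
        have hv₁ : v ∈ D₁ := Finset.mem_insert_of_mem hv
        rw [hA₃eq v (hD₁₂ hv₁), hA₂eq v hv₁, hA₁eq v hv]
    · push_neg at hex
      exact ⟨D, A, le_rfl, fun _ _ => rfl, hI.finish hex⟩

/-- The outer DFS loop over roots. -/
lemma cover [Fintype V] [DecidableEq V] (G : SimpleGraph V) :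
    ∀ n (D : Finset V) (A : V → List V),
      (Finset.univ \ D).card ≤ n → Inv G [] D A →
      ∃ A', Inv G [] Finset.univ A' := by
  intro n
  induction n with
  | zero =>
    intro D A hcard hI
    have : D = Finset.univ := by
      have : Finset.univ \ D = ∅ := Finset.card_eq_zero.1 (Nat.le_zero.1 hcard)
      have hsub : Finset.univ ⊆ D := by
        intro x _
        by_contra hx
        have : x ∈ Finset.univ \ D := by simp [hx]
        simp_all
      exact Finset.univ_subset_iff.mp hsub
    exact ⟨A, this ▸ hI⟩
  | succ n ih =>
    intro D A hcard hI
    by_cases hD : D = Finset.univ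
    · exact ⟨A, hD ▸ hI⟩
    · obtain ⟨v, hvD⟩ : ∃ v, v ∉ D := by
        by_contra hc
        push_neg at hc
        exact hD (Finset.eq_univ_of_forall hc)
      set A₁ : V → List V := Function.update A v [v] with hA₁
      set D₁ : Finset V := insert v D with hD₁
      have hA₁eq : ∀ u ∈ D, A₁ u = A u := by
        intro u hu
        have : u ≠ v := fun huv => hvD (huv ▸ hu)
        simp [hA₁, Function.update_of_ne this]
      have hA₁v : A₁ v = [v] := by simp [hA₁]
      have hI₁ : Inv G [v] D₁ A₁ := by
        refine ⟨?_, ?_, ?_, ?_, ?_, ?_, ?_, ?_⟩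
        · intro u hu
          rcases Finset.mem_insert.1 hu with rfl | hu
          · exact ⟨[], hA₁v⟩
          · rw [hA₁eq u hu]; exact hI.head u hu
        · intro u hu
          rcases Finset.mem_insert.1 hu with rfl | hu
          · rw [hA₁v]; exact List.IsChain.singleton _
          · rw [hA₁eq u hu]; exact hI.chn u hu
        · intro u hu
          rcases Finset.mem_insert.1 hu with rfl | hu
          · rw [hA₁v]; simp
          · rw [hA₁eq u hu]; exact hI.nodup u hu
        · intro u hu x hx
          rcases Finset.mem_insert.1 hu with rfl | hu
          · rw [hA₁v] at hx
            rw [List.mem_singleton.1 hx]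
            exact Finset.mem_insert_self _ _
          · rw [hA₁eq u hu] at hx
            exact Finset.mem_insert_of_mem (hI.memD u hu x hx)
        · intro u hu x hx
          rcases Finset.mem_insert.1 hu with rfl | hu
          · rw [hA₁v] at hx ⊢
            rw [List.mem_singleton.1 hx, hA₁v]
          · rw [hA₁eq u hu] at hx ⊢
            have hxD : x ∈ D := hI.memD u hu x hx
            rw [hA₁eq x hxD]
            exact hI.suff u hu x hx
        · intro u hu
          rw [List.mem_singleton.1 hu]
          exact Finset.mem_insert_self _ _
        · rintro h' t' heq
          obtain ⟨rfl, rfl⟩ : h' = v ∧ t' = [] := by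
            injection heq with a b; exact ⟨a.symm, b.symm⟩
          exact hA₁v
        · intro u hu huP x hadj
          have huv : u ≠ v := fun huv => huP (huv ▸ List.mem_singleton_self _)
          have huD : u ∈ D := (Finset.mem_insert.1 hu).resolve_left huv
          obtain ⟨hxD, hcomp⟩ := hI.fin u huD (by simp) x hadj
          refine ⟨Finset.mem_insert_of_mem hxD, ?_⟩
          rw [hA₁eq x hxD, hA₁eq u huD]
          exact hcomp
      have hcard₁ : (Finset.univ \ D₁).card ≤ n := by
        have hss : Finset.univ \ D₁ ⊂ Finset.univ \ D := by
          refine Finset.ssubset_iff_of_subset (Finset.sdiff_subset_sdiff le_rfl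
            (Finset.subset_insert _ _)) |>.2 ?_
          exact ⟨v, by simp [hD₁, hvD], by simp [hD₁]⟩
        have := Finset.card_lt_card hss
        omega
      obtain ⟨D₂, A₂, hD₁₂, _, hI₂⟩ := visit G n v [] D₁ A₁ hcard₁ hI₁
      have hcard₂ : (Finset.univ \ D₂).card ≤ n :=
        le_trans (Finset.card_le_card (Finset.sdiff_subset_sdiff le_rfl hD₁₂)) hcard₁
      exact ih D₂ A₂ hcard₂ hI₂

lemma exists_walk {G : SimpleGraph V} :
    ∀ (t : List V) (a : V), List.Chain G.Adj a t →
      ∃ (b : V) (p : G.Walk a b), p.support = a :: t := by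
  intro t
  induction t with
  | nil => exact fun a _ => ⟨a, SimpleGraph.Walk.nil, rfl⟩
  | cons c t ih =>
    intro a hc
    change List.IsChain G.Adj (a :: c :: t) at hc
    rw [List.isChain_cons_cons] at hc
    obtain ⟨b, p, hp⟩ := ih c hc.2
    exact ⟨b, SimpleGraph.Walk.cons hc.1 p, by simp [hp]⟩

lemma length_le_of_chain {G : SimpleGraph V} {k : ℕ}
    (h : ∀ (u v : V) (p : G.Walk u v), p.IsPath → p.length + 1 ≤ k)
    {a : V} {t : List V} (hc : List.Chain G.Adj a t) (hnd : (a :: t).Nodup) :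
    (a :: t).length ≤ k := by
  obtain ⟨b, p, hp⟩ := exists_walk t a hc
  have hpath : p.IsPath := (SimpleGraph.Walk.isPath_def p).2 (hp ▸ hnd)
  have := h a b p hpath
  have hlen := p.length_support
  rw [hp] at hlen
  simp only [List.length_cons] at hlen ⊢
  omega

end TDProof

/-- If every path in a finite simple graph `G` has at most `k` vertices (`k ≥ 1`),
then `td(G) ≤ k`. -/
theorem treeDepth_le_of_paths_short {V : Type*} [Fintype V]
    (G : SimpleGraph V) (k : ℕ) (hk : 1 ≤ k)
    (h : ∀ (u v : V) (p : G.Walk u v), p.IsPath → p.length + 1 ≤ k) :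
    treeDepth G ≤ k := by
  classical
  obtain ⟨A, hI⟩ := TDProof.cover G (Finset.univ \ (∅ : Finset V)).card ∅ (fun _ => [])
    le_rfl ⟨by simp, by simp, by simp, by simp, by simp, by simp, by simp, by simp⟩
  have hsuff : ∀ v u, u ∈ A v → A u <:+ A v :=
    fun v u hu => hI.suff v (Finset.mem_univ v) u hu
  have hself : ∀ v, v ∈ A v := fun v => hI.self_mem (Finset.mem_univ v)
  have hhead : ∀ v : V, ∃ t, A v = v :: t := fun v => hI.head v (Finset.mem_univ v)
  let F : RootedForest V :=
    { anc := fun u v => u ∈ A v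
      refl := hself
      antisymm := by
        intro u v h1 h2
        have s1 := hsuff v u h1
        have s2 := hsuff u v h2
        have heq : A u = A v := s1.eq_of_length (le_antisymm s1.length_le s2.length_le)
        obtain ⟨t1, ht1⟩ := hhead u
        obtain ⟨t2, ht2⟩ := hhead v
        rw [ht1, ht2] at heq
        injection heq
      trans := fun u v w h1 h2 => (hsuff w v h2).subset h1
      upChain := by
        intro u v w h1 h2
        rcases List.suffix_or_suffix_of_suffix (hsuff w u h1) (hsuff w v h2) with hs | hs
        · exact Or.inl (hs.subset (hself u))
        · exact Or.inr (hs.subset (hself v)) }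
  rw [treeDepth]
  apply Nat.sInf_le
  refine ⟨F, ?_, ?_⟩
  · intro s hs
    rcases s.eq_empty_or_nonempty with rfl | hne
    · simpa using Nat.zero_le k
    · obtain ⟨m, hm, hmax⟩ := Finset.exists_max_image s (fun v => (A v).length) hne
      have hsub : ∀ u ∈ s, u ∈ A m := by
        intro u hu
        rcases hs u hu m hm with h1 | h1
        · exact h1
        · have s1 := hsuff u m h1
          have heq : A m = A u := s1.eq_of_length (le_antisymm s1.length_le (hmax u hu))
          rw [heq]; exact hself u
      have h1 : s.card ≤ (A m).toFinset.card :=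
        Finset.card_le_card (fun u hu => List.mem_toFinset.2 (hsub u hu))
      have h2 : (A m).toFinset.card ≤ (A m).length := (A m).toFinset_card_le
      obtain ⟨t, ht⟩ := hhead m
      have hch : List.Chain G.Adj m t := by
        have := hI.chn m (Finset.mem_univ m)
        rw [ht] at this
        exact this
      have hnd : (m :: t).Nodup := by
        have := hI.nodup m (Finset.mem_univ m)
        rwa [ht] at this
      have h3 := TDProof.length_le_of_chain h hch hnd
      rw [ht] at h1 h2
      simp only [List.length_cons] at h2 h3
      omega
  · intro u v hadj
    exact ⟨G.ne_of_adj hadj, (hI.fin u (Finset.mem_univ u) (by simp) v hadj).2⟩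
end

section
/- For every finite simple graph G with at least one vertex, the path-width of G is at most td(G) − 1; equivalently, pw(G) + 1 ≤ td(G). -/
/-- A path decomposition of `G`: a finite sequence of bags `B 0, …, B (n-1) ⊆ V(G)`
such that every vertex lies in some bag, every edge has both endpoints in a common
bag, and for each vertex the indices of bags containing it form an interval. -/
def IsPathDecomposition {V : Type*} (G : SimpleGraph V) {n : ℕ}
    (B : Fin n → Finset V) : Prop :=
  (∀ v : V, ∃ i, v ∈ B i) ∧
  (∀ u v : V, G.Adj u v → ∃ i, u ∈ B i ∧ v ∈ B i) ∧
  (∀ (v : V) (i j k : Fin n), i ≤ j → j ≤ k → v ∈ B i → v ∈ B k → v ∈ B j)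

/-- The path-width of `G`: the minimum, over all path decompositions of `G`, of the
maximum bag size minus 1 (a decomposition has width at most `w` iff all its bags
have at most `w + 1` vertices). -/
noncomputable def pathWidth {V : Type*} (G : SimpleGraph V) : ℕ :=
  sInf { w | ∃ (n : ℕ) (B : Fin n → Finset V),
    IsPathDecomposition G B ∧ ∀ i, (B i).card ≤ w + 1 }

namespace TDPW

open Finset

open scoped Classical

variable {V : Type*}

noncomputable def lab [Fintype V] : V → ℕ := fun v => (Fintype.equivFin V v : ℕ)

lemma lab_inj [Fintype V] : Function.Injective (lab (V := V)) := fun u v h =>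
  (Fintype.equivFin V).injective (Fin.val_injective h)

variable [Fintype V] (F : RootedForest V)

/-- the least (closest-to-root) ancestor of `u` that is not an ancestor of `v` -/
lemma exists_min {u v : V} (h : ¬ F.anc u v) :
    ∃ m, (F.anc m u ∧ ¬ F.anc m v) ∧ ∀ x, F.anc x u → ¬ F.anc x v → F.anc m x := by
  set s : Finset V := Finset.univ.filter (fun w => F.anc w u ∧ ¬ F.anc w v) with hs
  have hmem : ∀ {x : V}, x ∈ s ↔ (F.anc x u ∧ ¬ F.anc x v) := by
    intro x; simp [hs]
  have hne : s.Nonempty := ⟨u, hmem.2 ⟨F.refl u, h⟩⟩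
  obtain ⟨m, hm, hmin⟩ := Finset.exists_min_image s
    (fun x => (Finset.univ.filter (fun w => F.anc w x)).card) hne
  refine ⟨m, hmem.1 hm, ?_⟩
  intro x hx1 hx2
  have hx : x ∈ s := hmem.2 ⟨hx1, hx2⟩
  rcases F.upChain m x u (hmem.1 hm).1 hx1 with h1 | h1
  · exact h1
  · have hsub : (Finset.univ.filter (fun w => F.anc w x)) ⊆
        (Finset.univ.filter (fun w => F.anc w m)) := by
      intro q hq
      simp only [Finset.mem_filter, Finset.mem_univ, true_and] at hq ⊢
      exact F.trans q x m hq h1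
    have heq := Finset.eq_of_subset_of_card_le hsub (hmin x hx)
    have : m ∈ Finset.univ.filter (fun w => F.anc w x) := by
      rw [heq]; simp [F.refl]
    simpa using this

noncomputable def c (u v : V) : V :=
  if h : ¬ F.anc u v then (exists_min F h).choose else u

lemma c_spec {u v : V} (h : ¬ F.anc u v) :
    (F.anc (c F u v) u ∧ ¬ F.anc (c F u v) v) ∧
      ∀ x, F.anc x u → ¬ F.anc x v → F.anc (c F u v) x := by
  rw [c, dif_pos h]; exact (exists_min F h).choose_spec

lemma c_anc {u v : V} (h : ¬ F.anc u v) : F.anc (c F u v) u := (c_spec F h).1.1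

lemma c_nanc {u v : V} (h : ¬ F.anc u v) : ¬ F.anc (c F u v) v := (c_spec F h).1.2

lemma c_min {u v : V} (h : ¬ F.anc u v) :
    ∀ x, F.anc x u → ¬ F.anc x v → F.anc (c F u v) x := (c_spec F h).2

lemma c_eq {u v m : V} (h : ¬ F.anc u v) (hm1 : F.anc m u) (hm2 : ¬ F.anc m v)
    (hmin : ∀ x, F.anc x u → ¬ F.anc x v → F.anc m x) : c F u v = m :=
  F.antisymm _ _ (c_min F h m hm1 hm2) (hmin _ (c_anc F h) (c_nanc F h))

lemma strict_common {u v q : V} (h : ¬ F.anc u v) (hq : F.anc q (c F u v))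
    (hne : q ≠ c F u v) : F.anc q v := by
  by_contra hqv
  exact hne (F.antisymm q _ hq (c_min F h q (F.trans q _ u hq (c_anc F h)) hqv))

lemma c_ne {u v : V} (h1 : ¬ F.anc u v) (h2 : ¬ F.anc v u) : c F u v ≠ c F v u :=
  fun he => (c_nanc F h1) (he ▸ c_anc F h2)

lemma shift {u v z : V} (h1 : ¬ F.anc u v) (h2 : ¬ F.anc v u) (hz : F.anc (c F u v) z) :
    (¬ F.anc z v ∧ ¬ F.anc v z) ∧ c F z v = c F u v ∧ c F v z = c F v u := by
  have hzv : ¬ F.anc z v := fun hzv => (c_nanc F h1) (F.trans _ z v hz hzv)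
  have hvz : ¬ F.anc v z := by
    intro hvz
    rcases F.upChain v (c F u v) z hvz hz with h | h
    · exact h2 (F.trans v _ u h (c_anc F h1))
    · exact (c_nanc F h1) h
  refine ⟨⟨hzv, hvz⟩, ?_, ?_⟩
  · refine c_eq F hzv hz (c_nanc F h1) ?_
    intro x hxz hxv
    rcases F.upChain x (c F u v) z hxz hz with h | h
    · by_cases hxa : x = c F u v
      · exact hxa ▸ F.refl _
      · exact absurd (strict_common F h1 h hxa) hxv
    · exact h
  · refine c_eq F hvz (c_anc F h2) ?_ ?_
    · intro hbz
      rcases F.upChain (c F v u) (c F u v) z hbz hz with h | h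
      · exact (c_nanc F h2) (F.trans _ _ u h (c_anc F h1))
      · exact (c_nanc F h1) (F.trans _ _ v h (c_anc F h2))
    · intro x hxv hxz
      rcases F.upChain x (c F v u) v hxv (c_anc F h2) with h | h
      · by_cases hxb : x = c F v u
        · exact hxb ▸ F.refl _
        · have hxu : F.anc x u := strict_common F h2 h hxb
          rcases F.upChain x (c F u v) u hxu (c_anc F h1) with h' | h'
          · exact absurd (F.trans x _ z h' hz) hxz
          · exact absurd (F.trans _ x v h' hxv) (c_nanc F h1)
      · exact h

/-- the DFS-like strict total order -/
def r (u v : V) : Prop :=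
  (F.anc u v ∧ u ≠ v) ∨
    (¬ F.anc u v ∧ ¬ F.anc v u ∧ lab (c F u v) < lab (c F v u))

lemma r_irrefl : ∀ u, ¬ r F u u := by
  rintro u (⟨_, h⟩ | ⟨h, _, _⟩)
  · exact h rfl
  · exact h (F.refl u)

lemma r_trichotomous : ∀ u v : V, r F u v ∨ u = v ∨ r F v u := by
  intro u v
  by_cases he : u = v
  · exact Or.inr (Or.inl he)
  by_cases h1 : F.anc u v
  · exact Or.inl (Or.inl ⟨h1, he⟩)
  by_cases h2 : F.anc v u
  · exact Or.inr (Or.inr (Or.inl ⟨h2, Ne.symm he⟩))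
  rcases lt_or_gt_of_ne (fun hl => c_ne F h1 h2 (lab_inj hl)) with hlt | hlt
  · exact Or.inl (Or.inr ⟨h1, h2, hlt⟩)
  · exact Or.inr (Or.inr (Or.inr ⟨h2, h1, hlt⟩))

lemma ceq {u v w : V} (huv1 : ¬ F.anc u v) (huv2 : ¬ F.anc v u)
    (hvw1 : ¬ F.anc v w) (hvw2 : ¬ F.anc w v) (huw1 : ¬ F.anc u w)
    (hm : c F v u = c F v w) (hne : c F u v ≠ c F w v) : c F u w = c F u v := by
  refine c_eq F huw1 (c_anc F huv1) ?_ ?_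
  · intro hW
    have h1 : F.anc (c F w v) (c F u v) := c_min F hvw2 _ hW (c_nanc F huv1)
    by_cases he : c F w v = c F u v
    · exact hne he.symm
    · exact (c_nanc F hvw2) (strict_common F huv1 h1 he)
  · intro x hxu hxw
    rcases F.upChain x (c F u v) u hxu (c_anc F huv1) with h | h
    · by_cases hxe : x = c F u v
      · exact hxe ▸ F.refl _
      · have hxv : F.anc x v := strict_common F huv1 h hxe
        rcases F.upChain x (c F v w) v hxv (c_anc F hvw1) with h' | h'
        · by_cases hxm : x = c F v w
          · exact absurd hxu (by rw [hxm, ← hm]; exact c_nanc F huv2)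
          · exact absurd (strict_common F hvw1 h' hxm) hxw
        · exact absurd (F.trans _ x u h' hxu) (by rw [← hm]; exact c_nanc F huv2)
    · exact h

lemma r_trans : ∀ u v w, r F u v → r F v w → r F u w := by
  rintro u v w (⟨huv, hne⟩ | ⟨h1, h2, hl⟩) (⟨hvw, hne'⟩ | ⟨h1', h2', hl'⟩)
  · -- both ancestor
    refine Or.inl ⟨F.trans u v w huv hvw, ?_⟩
    rintro rfl
    exact hne' (F.antisymm v u hvw huv)
  · -- anc u v (strict), incomp v w
    have hwu : ¬ F.anc w u := fun hwu => h2' (F.trans w u v hwu huv)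
    by_cases huw : F.anc u w
    · refine Or.inl ⟨huw, ?_⟩
      rintro rfl
      exact h2' huv
    · -- incomp u w
      rcases F.upChain u (c F v w) v huv (c_anc F h1') with h | h
      · by_cases hue : u = c F v w
        · obtain ⟨_, e1, e2⟩ := shift F h1' h2' (hue ▸ F.refl u : F.anc (c F v w) u)
          exact Or.inr ⟨huw, hwu, by rw [e1, e2]; exact hl'⟩
        · exact absurd (strict_common F h1' h hue) huw
      · obtain ⟨_, e1, e2⟩ := shift F h1' h2' h
        exact Or.inr ⟨huw, hwu, by rw [e1, e2]; exact hl'⟩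
  · -- incomp u v, anc v w (strict)
    have hz : F.anc (c F v u) w := F.trans _ v w (c_anc F h2) hvw
    obtain ⟨⟨hwu, huw⟩, e1, e2⟩ := shift F h2 h1 hz
    exact Or.inr ⟨huw, hwu, by rw [e1, e2]; exact hl⟩
  · -- incomp u v, incomp v w
    have hwu : ¬ F.anc w u := by
      intro hwu
      have hz : F.anc (c F w v) u := F.trans _ w u (c_anc F h2') hwu
      obtain ⟨_, e1, e2⟩ := shift F h2' h1' hz
      rw [← e1, ← e2] at hl'
      exact absurd (hl.trans hl') (lt_irrefl _)
    by_cases huw : F.anc u w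
    · refine Or.inl ⟨huw, ?_⟩
      rintro rfl
      exact hwu (F.refl _)
    -- incomp u w; compare m1 = c v u, m2 = c v w
    rcases F.upChain (c F v u) (c F v w) v (c_anc F h2) (c_anc F h1') with h | h
    · by_cases hem : c F v u = c F v w
      · -- equal case
        have q1 : c F u v ≠ c F w v := by
          intro he
          rw [← he, ← hem] at hl'
          exact absurd (hl.trans hl') (lt_irrefl _)
        have e1 : c F u w = c F u v := ceq F h1 h2 h1' h2' huw hem q1
        have e2 : c F w u = c F w v :=
          ceq F h2' h1' h2 h1 hwu hem.symm (Ne.symm q1)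
        refine Or.inr ⟨huw, hwu, ?_⟩
        rw [e1, e2]
        calc lab (c F u v) < lab (c F v u) := hl
          _ = lab (c F v w) := by rw [hem]
          _ < lab (c F w v) := hl'
      · -- c v u strict ancestor of c v w : anc (c v u) w
        have hW : F.anc (c F v u) w := strict_common F h1' h hem
        obtain ⟨_, e1, e2⟩ := shift F h2 h1 hW
        exact Or.inr ⟨huw, hwu, by rw [e2, e1]; exact hl⟩
    · by_cases hem : c F v w = c F v u
      · have q1 : c F u v ≠ c F w v := by
          intro he
          rw [← he, hem] at hl'
          exact absurd (hl.trans hl') (lt_irrefl _)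
        have e1 : c F u w = c F u v := ceq F h1 h2 h1' h2' huw hem.symm q1
        have e2 : c F w u = c F w v :=
          ceq F h2' h1' h2 h1 hwu hem (Ne.symm q1)
        refine Or.inr ⟨huw, hwu, ?_⟩
        rw [e1, e2]
        calc lab (c F u v) < lab (c F v u) := hl
          _ = lab (c F v w) := by rw [hem]
          _ < lab (c F w v) := hl'
      · -- c v w strict ancestor of c v u : anc (c v w) u
        have hU : F.anc (c F v w) u := strict_common F h2 h hem
        obtain ⟨_, e1, e2⟩ := shift F h1' h2' hU
        exact Or.inr ⟨huw, hwu, by rw [e1, e2]; exact hl'⟩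


theorem exists_decomp (G : SimpleGraph V) {t : ℕ}
    (hH : ∀ s : Finset V, (∀ u ∈ s, ∀ v ∈ s, F.anc u v ∨ F.anc v u) → s.card ≤ t)
    (hG : ∀ u v : V, G.Adj u v → u ≠ v ∧ (F.anc u v ∨ F.anc v u)) :
    ∃ (B : Fin (Fintype.card V) → Finset V),
      IsPathDecomposition G B ∧ ∀ i, (B i).card ≤ t := by
  haveI : IsStrictTotalOrder V (r F) :=
    { trichotomous := fun a b h1 h2 => by
        rcases r_trichotomous F a b with h | h | h
        exacts [absurd h h1, h, absurd h h2]
      irrefl := r_irrefl F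
      trans := r_trans F }
  letI : LinearOrder V := linearOrderOfSTO (r F)
  have hlt : ∀ u v : V, u < v ↔ r F u v := fun u v => Iff.rfl
  let e := monoEquivOfFin V rfl
  have hmem : ∀ (w : V) (i : Fin (Fintype.card V)),
      w ∈ Finset.univ.filter (fun q => F.anc q (e i)) ↔ F.anc w (e i) := by
    intro w i; simp
  refine ⟨fun i => Finset.univ.filter (fun w => F.anc w (e i)), ⟨?_, ?_, ?_⟩, ?_⟩
  · intro v
    exact ⟨e.symm v, (hmem v _).2 (by simp [e.apply_symm_apply, F.refl])⟩
  · intro u v huv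
    rcases hG u v huv with ⟨hne, h | h⟩
    · exact ⟨e.symm v, ((hmem u _).2 (by simpa [e.apply_symm_apply] using h)),
        (hmem v _).2 (by simp [e.apply_symm_apply, F.refl])⟩
    · exact ⟨e.symm u, (hmem u _).2 (by simp [e.apply_symm_apply, F.refl]),
        ((hmem v _).2 (by simpa [e.apply_symm_apply] using h))⟩
  · intro v i j k hij hjk hvi hvk
    rw [hmem] at hvi hvk ⊢
    by_contra hvx
    set x := e j with hx
    by_cases hxv : F.anc x v
    · -- x is a strict ancestor of v, hence of e i
      by_cases hie : e i = x
      · exact hvx (hie ▸ hvi)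
      have : x < e i := (hlt x (e i)).2 (Or.inl ⟨F.trans x v (e i) hxv hvi, fun h => hie h.symm⟩)
      have : j < i := by
        have := e.lt_iff_lt.1 this
        simpa using this
      exact absurd hij (by omega)
    · have key : ∀ y : V, F.anc v y →
          ¬ F.anc y x ∧ ¬ F.anc x y ∧ c F y x = c F v x ∧ c F x y = c F x v := by
        intro y hy
        obtain ⟨⟨a1, a2⟩, b1, b2⟩ := shift F hvx hxv (F.trans _ v y (c_anc F hvx) hy)
        exact ⟨a1, a2, b1, b2⟩
      obtain ⟨ki1, ki2, ki3, ki4⟩ := key (e i) hvi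
      obtain ⟨kk1, kk2, kk3, kk4⟩ := key (e k) hvk
      have hij' : i < j := by
        rcases lt_or_eq_of_le hij with h | h
        · exact h
        · exact absurd hvi (by rw [h]; exact hvx)
      have hjk' : j < k := by
        rcases lt_or_eq_of_le hjk with h | h
        · exact h
        · exact absurd hvk (by rw [← h]; exact hvx)
      have l1 : e i < x := by
        rw [hx]
        exact e.lt_iff_lt.2 (by simpa using hij')
      have l2 : x < e k := by
        rw [hx]
        exact e.lt_iff_lt.2 (by simpa using hjk')
      rcases (hlt _ _).1 l1 with ⟨h, _⟩ | ⟨_, _, h⟩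
      · exact ki1 h
      · rcases (hlt _ _).1 l2 with ⟨h', _⟩ | ⟨_, _, h'⟩
        · exact kk2 h'
        · rw [ki3, ki4] at h
          rw [kk3, kk4] at h'
          exact absurd (h.trans h') (lt_irrefl _)
  · intro i
    apply hH
    intro a ha b hb
    rw [hmem] at ha hb
    exact F.upChain a b (e i) ha hb

end TDPW

/-- For every finite simple graph `G` with at least one vertex, `pw(G) + 1 ≤ td(G)`. -/
theorem pathWidth_add_one_le_treeDepth {V : Type*} [Fintype V] [Nonempty V]
    (G : SimpleGraph V) : pathWidth G + 1 ≤ treeDepth G := by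
  classical
  have hne : { t | ∃ F : RootedForest V, F.HeightLE t ∧ G ≤ F.closure }.Nonempty := by
    refine ⟨Fintype.card V,
      ⟨{ anc := fun u v => TDPW.lab u ≤ TDPW.lab v
         refl := fun v => le_refl _
         antisymm := fun u v h1 h2 => TDPW.lab_inj (le_antisymm h1 h2)
         trans := fun u v w h1 h2 => h1.trans h2
         upChain := fun u v w _ _ => le_total _ _ }, ?_, ?_⟩⟩
    · intro s _
      simpa using Finset.card_le_univ s
    · intro u v h
      exact ⟨G.ne_of_adj h, le_total _ _⟩
  have htd : treeDepth G = sInf { t | ∃ F : RootedForest V, F.HeightLE t ∧ G ≤ F.closure } := rfl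
  rw [htd]
  set t := sInf { t | ∃ F : RootedForest V, F.HeightLE t ∧ G ≤ F.closure } with ht
  obtain ⟨F, hH, hG⟩ := Nat.sInf_mem hne
  have ht1 : 1 ≤ t := by
    have := hH {Classical.arbitrary V} ?_
    · simpa using this
    · intro u hu v hv
      simp only [Finset.mem_singleton] at hu hv
      subst hu; subst hv
      exact Or.inl (F.refl _)
  obtain ⟨B, hB, hcard⟩ := TDPW.exists_decomp F G hH (fun u v h => hG h)
  have hpw : pathWidth G ≤ t - 1 := by
    apply Nat.sInf_le
    exact ⟨Fintype.card V, B, hB, fun i => le_trans (hcard i) (by omega)⟩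
  omega
end

section
/- For every finite simple graph G with n ≥ 1 vertices, td(G) ≤ (tw(G) + 1) · ⌈log₂(n + 1)⌉, where tw(G) denotes the tree-width of G. -/
/-- A tree decomposition of `G`: a tree `T` whose nodes carry bags `B i ⊆ V(G)` such
that every vertex lies in some bag, every edge has both endpoints in a common bag,
and for each vertex the set of nodes whose bags contain it induces a connected
subtree of `T`. -/
def IsTreeDecomposition {V ι : Type*} (G : SimpleGraph V) (T : SimpleGraph ι)
    (B : ι → Finset V) : Prop :=
  T.IsTree ∧ (∀ v : V, ∃ i, v ∈ B i) ∧
  (∀ u v : V, G.Adj u v → ∃ i, u ∈ B i ∧ v ∈ B i) ∧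
  (∀ v : V, (T.induce {i | v ∈ B i}).Connected)

/-- The tree-width of `G`: the minimum, over all tree decompositions of `G`, of the
maximum bag size minus 1 (a decomposition has width at most `w` iff all its bags
have at most `w + 1` vertices). -/
noncomputable def treeWidth {V : Type*} (G : SimpleGraph V) : ℕ :=
  sInf { w | ∃ (n : ℕ) (T : SimpleGraph (Fin n)) (B : Fin n → Finset V),
    IsTreeDecomposition G T B ∧ ∀ i, (B i).card ≤ w + 1 }


namespace TDAux
open SimpleGraph

variable {V : Type*}

/-- Reachability within a vertex set `A`. -/
def Rel (G : SimpleGraph V) (A : Set V) (u v : V) : Prop :=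
  Relation.ReflTransGen (fun a b => G.Adj a b ∧ a ∈ A ∧ b ∈ A) u v

lemma Rel.trans {G : SimpleGraph V} {A : Set V} {u v w : V}
    (h1 : Rel G A u v) (h2 : Rel G A v w) : Rel G A u w :=
  Relation.ReflTransGen.trans h1 h2

lemma Rel.symm {G : SimpleGraph V} {A : Set V} {u v : V} (h : Rel G A u v) : Rel G A v u := by
  induction h with
  | refl => exact Relation.ReflTransGen.refl
  | tail _ hbc ih =>
    exact Relation.ReflTransGen.trans
      (Relation.ReflTransGen.single ⟨hbc.1.symm, hbc.2.2, hbc.2.1⟩) ih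

lemma Rel.mono {G : SimpleGraph V} {A B : Set V} (hAB : A ⊆ B) {u v : V}
    (h : Rel G A u v) : Rel G B u v := by
  induction h with
  | refl => exact Relation.ReflTransGen.refl
  | tail _ hbc ih => exact ih.tail ⟨hbc.1, hAB hbc.2.1, hAB hbc.2.2⟩

section Tree
variable {ι : Type*} {T : SimpleGraph ι}

lemma rtg_walk {i j k : ι} (hji : j ≠ i)
    (h : Relation.ReflTransGen (fun a b => T.Adj a b ∧ a ≠ i ∧ b ≠ i) j k) :
    ∃ w : T.Walk j k, i ∉ w.support := by
  induction h with
  | refl => exact ⟨Walk.nil, by simp [hji.symm]⟩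
  | tail _ hbc ih =>
    obtain ⟨w, hw⟩ := ih
    refine ⟨w.concat hbc.1, ?_⟩
    rw [Walk.support_concat]
    simp only [List.concat_eq_append, List.mem_append, List.mem_singleton]
    rintro (h' | h')
    · exact hw h'
    · exact hbc.2.2 h'.symm

lemma tree_no_both (hT : T.IsTree) {i j k : ι} (hij : T.Adj i j)
    (h1 : Relation.ReflTransGen (fun a b => T.Adj a b ∧ a ≠ i ∧ b ≠ i) j k)
    (h2 : Relation.ReflTransGen (fun a b => T.Adj a b ∧ a ≠ j ∧ b ≠ j) i k) : False := by
  letI := Classical.decEq ι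
  obtain ⟨w1, hw1⟩ := rtg_walk hij.ne' h1
  obtain ⟨w2, hw2⟩ := rtg_walk hij.ne h2
  set q := w1.reverse.bypass with hq
  have hqi : i ∉ q.support := fun h =>
    hw1 (by simpa using w1.reverse.support_bypass_subset h)
  set p := w2.reverse.bypass with hp
  have hpj : j ∉ p.support := fun h =>
    hw2 (by simpa using w2.reverse.support_bypass_subset h)
  have hqrev : q.reverse.IsPath := (w1.reverse.bypass_isPath).reverse
  have hiq : i ∉ q.reverse.support := by
    rw [Walk.support_reverse]; simpa using hqi
  have hp' : (Walk.cons hij q.reverse).reverse.IsPath := by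
    refine Walk.IsPath.reverse ?_
    rw [Walk.cons_isPath_iff]
    exact ⟨hqrev, hiq⟩
  have huniq := hT.existsUnique_path k i
  have : p = (Walk.cons hij q.reverse).reverse :=
    (huniq.unique (w2.reverse.bypass_isPath) hp')
  apply hpj
  rw [this, Walk.support_reverse]
  simp [Walk.support_cons, Walk.support_reverse]

lemma induce_reach {s : Set ι} (h : (T.induce s).Connected)
    {a b : ι} (ha : a ∈ s) (hb : b ∈ s) :
    Relation.ReflTransGen (fun x y => T.Adj x y ∧ x ∈ s ∧ y ∈ s) a b := by
  have aux : ∀ (x y : s) (_ : (T.induce s).Walk x y),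
      Relation.ReflTransGen (fun x y => T.Adj x y ∧ x ∈ s ∧ y ∈ s) x.1 y.1 := by
    intro x y w
    induction w with
    | nil => exact Relation.ReflTransGen.refl
    | @cons x y z hxy _ ih =>
      exact Relation.ReflTransGen.head ⟨hxy, x.2, y.2⟩ ih
  obtain ⟨w⟩ := h ⟨a, ha⟩ ⟨b, hb⟩
  exact aux _ _ w

lemma reach_neighbor {i : ι} :
    ∀ (a : ι) (p : T.Walk a i), a ≠ i →
      ∃ j, T.Adj i j ∧
        Relation.ReflTransGen (fun a b => T.Adj a b ∧ a ≠ i ∧ b ≠ i) j a := by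
  intro a p
  induction p with
  | nil => exact fun h => absurd rfl h
  | @cons x y z hxy p ih =>
    intro hx
    by_cases hy : y = z
    · subst hy
      exact ⟨x, hxy.symm, Relation.ReflTransGen.refl⟩
    · obtain ⟨j, hj1, hj2⟩ := ih hy
      exact ⟨j, hj1, hj2.tail ⟨hxy.symm, hy, hx⟩⟩

end Tree

lemma separator {ι : Type*} [Fintype ι] {G : SimpleGraph V} {T : SimpleGraph ι}
    {B : ι → Finset V} {w : ℕ}
    (hTD : IsTreeDecomposition G T B) (hB : ∀ i, (B i).card ≤ w + 1)
    (C : Finset V) :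
    ∃ S : Finset V, S ⊆ C ∧ S.card ≤ w + 1 ∧
      ∀ v ∈ C, v ∉ S → ∀ D : Finset V,
        (∀ u ∈ D, u ∈ C ∧ Rel G ((↑C : Set V) \ ↑S) v u) → D.card ≤ C.card / 2 := by
  classical
  obtain ⟨hT, hcover, hedge, hcon⟩ := hTD
  set c := C.card with hc
  set NR : ι → ι → ι → Prop :=
    fun i j k => Relation.ReflTransGen (fun a b => T.Adj a b ∧ a ≠ i ∧ b ≠ i) j k with hNR
  set Wt : ι → ι → ℕ :=
    fun i j => (C.filter (fun v => v ∉ B i ∧ ∀ k, v ∈ B k → NR i j k)).card with hWt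
  have bagreach : ∀ (v : V) (i k k' : ι), v ∉ B i → v ∈ B k → v ∈ B k' →
      Relation.ReflTransGen (fun a b => T.Adj a b ∧ a ≠ i ∧ b ≠ i) k k' := by
    intro v i k k' hvi hk hk'
    have h := induce_reach (hcon v) (a := k) (b := k') hk hk'
    refine Relation.ReflTransGen.mono ?_ _ _ h
    rintro a b ⟨hab, ha, hb⟩
    exact ⟨hab, fun h => hvi (h ▸ ha), fun h => hvi (h ▸ hb)⟩
  have main : ∃ i : ι, ∀ j, T.Adj i j → Wt i j ≤ c / 2 := by
    by_contra hcontra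
    push_neg at hcontra
    choose n hn1 hn2 using hcontra
    have hmap : ∀ i, s(i, n i) ∈ T.edgeFinset := fun i => by
      rw [SimpleGraph.mem_edgeFinset]; exact (hn1 i)
    have hninj : ¬ Function.Injective (fun i => (⟨s(i, n i), hmap i⟩ : T.edgeFinset)) := by
      intro hinj
      have h1 := Fintype.card_le_of_injective _ hinj
      have h2 : Fintype.card T.edgeFinset = T.edgeFinset.card := Fintype.card_coe _
      have h3 := hT.card_edgeFinset
      omega
    rw [Function.not_injective_iff] at hninj
    obtain ⟨i, i', heq, hne⟩ := hninj
    have heq2 : s(i, n i) = s(i', n i') := congrArg Subtype.val heq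
    rw [Sym2.eq_iff] at heq2
    rcases heq2 with ⟨h1, h2⟩ | ⟨h1, h2⟩
    · exact hne h1
    have hadj : T.Adj i (n i) := hn1 i
    have hW1 : c / 2 < Wt i (n i) := hn2 i
    have hW2 : c / 2 < Wt (n i) i := by
      have h3 := hn2 i'
      rw [← h1] at h3
      rw [← h2] at h3
      exact h3
    set D1 := C.filter (fun v => v ∉ B i ∧ ∀ k, v ∈ B k → NR i (n i) k) with hD1
    set D2 := C.filter (fun v => v ∉ B (n i) ∧ ∀ k, v ∈ B k → NR (n i) i k) with hD2
    have hdisj : Disjoint D1 D2 := by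
      rw [Finset.disjoint_left]
      intro v hv1 hv2
      rw [hD1, Finset.mem_filter] at hv1
      rw [hD2, Finset.mem_filter] at hv2
      obtain ⟨k₀, hk₀⟩ := hcover v
      exact tree_no_both hT hadj (hv1.2.2 k₀ hk₀) (hv2.2.2 k₀ hk₀)
    have hsub : D1 ∪ D2 ⊆ C := by
      rw [Finset.union_subset_iff]
      exact ⟨Finset.filter_subset _ _, Finset.filter_subset _ _⟩
    have hcc := Finset.card_le_card hsub
    rw [Finset.card_union_of_disjoint hdisj] at hcc
    have e1 : Wt i (n i) = D1.card := rfl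
    have e2 : Wt (n i) i = D2.card := rfl
    omega
  obtain ⟨i, hi⟩ := main
  refine ⟨C ∩ B i, Finset.inter_subset_left,
    le_trans (Finset.card_le_card Finset.inter_subset_right) (hB i), ?_⟩
  intro v hvC hvS D hD
  have hvBi : v ∉ B i := fun h => hvS (Finset.mem_inter.2 ⟨hvC, h⟩)
  obtain ⟨k₀, hk₀⟩ := hcover v
  have hk₀i : k₀ ≠ i := fun h => hvBi (h ▸ hk₀)
  obtain ⟨p, hp, -⟩ := hT.existsUnique_path k₀ i
  obtain ⟨j, hadj, hNRk₀⟩ : ∃ j, T.Adj i j ∧ NR i j k₀ := reach_neighbor k₀ p hk₀i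
  have hsubset : D ⊆
      C.filter (fun u => u ∉ B i ∧ ∀ k, u ∈ B k → NR i j k) := by
    intro u hu
    rw [Finset.mem_filter]
    refine ⟨(hD u hu).1, ?_⟩
    have base : v ∉ B i ∧ ∀ k, v ∈ B k → NR i j k := by
      refine ⟨hvBi, fun k hk => hNRk₀.trans (bagreach v i k₀ k hvBi hk₀ hk)⟩
    have step : ∀ x y : V, (x ∉ B i ∧ ∀ k, x ∈ B k → NR i j k) →
        G.Adj x y → y ∈ (↑C : Set V) \ ↑(C ∩ B i) →
        (y ∉ B i ∧ ∀ k, y ∈ B k → NR i j k) := by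
      intro x y hx hxy hyA
      have hyBi : y ∉ B i := by
        intro h
        exact hyA.2 (by exact_mod_cast Finset.mem_inter.2 ⟨by exact_mod_cast hyA.1, h⟩)
      obtain ⟨k₁, hk₁x, hk₁y⟩ := hedge x y hxy
      refine ⟨hyBi, fun k hk => (hx.2 k₁ hk₁x).trans (bagreach y i k₁ k hyBi hk₁y hk)⟩
    have : ∀ u, Rel G ((↑C : Set V) \ ↑(C ∩ B i)) v u →
        (u ∉ B i ∧ ∀ k, u ∈ B k → NR i j k) := by
      intro u hrel
      induction hrel with
      | refl => exact base
      | tail _ hbc ih => exact step _ _ ih hbc.1 hbc.2.2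
    exact this u (hD u hu).2
  exact le_trans (Finset.card_le_card hsubset) (hi j hadj)

lemma key {V : Type*} [Fintype V] {ι : Type*} [Fintype ι] {G : SimpleGraph V}
    {T : SimpleGraph ι} {B : ι → Finset V} {w : ℕ}
    (hTD : IsTreeDecomposition G T B) (hB : ∀ i, (B i).card ≤ w + 1) :
    ∀ (m : ℕ) (W : Finset V),
      (∀ v ∈ W, ∀ D : Finset V, (∀ u ∈ D, u ∈ W ∧ Rel G ↑W v u) → D.card ≤ m) →
      ∃ F : RootedForest V,
        (∀ u v, F.anc u v → u = v ∨ (u ∈ W ∧ v ∈ W ∧ Rel G ↑W u v)) ∧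
        (∀ s : Finset V, ↑s ⊆ (↑W : Set V) →
          (∀ u ∈ s, ∀ v ∈ s, F.anc u v ∨ F.anc v u) →
          s.card ≤ (w + 1) * Nat.clog 2 (m + 1)) ∧
        (∀ u v, G.Adj u v → u ∈ W → v ∈ W → F.anc u v ∨ F.anc v u) := by
  intro m
  induction m using Nat.strong_induction_on with
  | _ m ih =>
  intro W hcomp
  classical
  by_cases hWe : W = ∅
  · subst hWe
    refine ⟨⟨Eq, fun v => rfl, fun u v h _ => h, fun u v x h h' => h.trans h',
        fun u v x h h' => Or.inl (h.trans h'.symm)⟩, fun u v h => Or.inl h, ?_, ?_⟩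
    · intro s hs _
      have hse : s = ∅ := by
        refine Finset.eq_empty_of_forall_notMem fun x hx => ?_
        simpa using hs hx
      simp [hse]
    · intro u v _ hu _
      simp at hu
  · obtain ⟨v₀, hv₀⟩ := Finset.nonempty_iff_ne_empty.mpr hWe
    have hm1 : 1 ≤ m := by
      have := hcomp v₀ hv₀ {v₀} (fun u hu => by
        rw [Finset.mem_singleton] at hu; subst hu
        exact ⟨hv₀, Relation.ReflTransGen.refl⟩)
      simpa using this
    set comp : V → Finset V := fun v => W.filter (fun u => Rel G ↑W v u) with hcompdef
    have hmemcomp : ∀ v u, u ∈ comp v ↔ u ∈ W ∧ Rel G ↑W v u := by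
      intro v u; simp [hcompdef]
    have hcompEq : ∀ u v, Rel G ↑W u v → comp u = comp v := by
      intro u v h
      ext x
      rw [hmemcomp, hmemcomp]
      exact ⟨fun hx => ⟨hx.1, (Rel.symm h).trans hx.2⟩, fun hx => ⟨hx.1, h.trans hx.2⟩⟩
    obtain ⟨Sep, hSep⟩ : ∃ Sep : Finset V → Finset V, ∀ C, Sep C ⊆ C ∧
        (Sep C).card ≤ w + 1 ∧ (∀ v ∈ C, v ∉ Sep C → ∀ D : Finset V,
          (∀ u ∈ D, u ∈ C ∧ Rel G ((↑C : Set V) \ ↑(Sep C)) v u) → D.card ≤ C.card / 2) := by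
      choose Sep h1 h2 h3 using fun C => separator hTD hB C
      exact ⟨Sep, fun C => ⟨h1 C, h2 C, h3 C⟩⟩
    set S : Finset V := W.filter (fun v => v ∈ Sep (comp v)) with hSdef
    have hSsub : S ⊆ W := Finset.filter_subset _ _
    set W' : Finset V := W \ S with hW'def
    have hW'sub : W' ⊆ W := Finset.sdiff_subset
    have hW'mem : ∀ x, x ∈ W' ↔ x ∈ W ∧ x ∉ S := fun x => Finset.mem_sdiff
    have hW'coe : (↑W' : Set V) ⊆ ↑W := Finset.coe_subset.2 hW'sub
    have hcomp' : ∀ v ∈ W', ∀ D : Finset V,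
        (∀ u ∈ D, u ∈ W' ∧ Rel G ↑W' v u) → D.card ≤ m / 2 := by
      intro v hv D hD
      have hvW : v ∈ W := hW'sub hv
      have hvS : v ∉ S := ((hW'mem v).1 hv).2
      have hvSep : v ∉ Sep (comp v) := fun h => hvS (Finset.mem_filter.2 ⟨hvW, h⟩)
      have hvC : v ∈ comp v := (hmemcomp v v).2 ⟨hvW, Relation.ReflTransGen.refl⟩
      have notsep : ∀ b, b ∈ W' → Rel G ↑W v b → b ∈ (↑(comp v) : Set V) \ ↑(Sep (comp v)) := by
        intro b hbW' hrelb
        have hbW : b ∈ W := hW'sub hbW'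
        have hbC : b ∈ comp v := (hmemcomp v b).2 ⟨hbW, hrelb⟩
        have hbS : b ∉ S := ((hW'mem b).1 hbW').2
        have hbSep : b ∉ Sep (comp b) := fun h => hbS (Finset.mem_filter.2 ⟨hbW, h⟩)
        refine ⟨by exact_mod_cast hbC, fun hmem => ?_⟩
        apply hbSep
        rw [← hcompEq v b hrelb]
        exact_mod_cast hmem
      have hDsub : ∀ u ∈ D, u ∈ comp v ∧ Rel G ((↑(comp v) : Set V) \ ↑(Sep (comp v))) v u := by
        intro u hu
        obtain ⟨huW', hrel⟩ := hD u hu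
        refine ⟨(hmemcomp v u).2 ⟨hW'sub huW', Rel.mono hW'coe hrel⟩, ?_⟩
        have mainrel : ∀ x, Rel G ↑W' v x → Rel G ((↑(comp v) : Set V) \ ↑(Sep (comp v))) v x := by
          intro x hx
          induction hx with
          | refl => exact Relation.ReflTransGen.refl
          | @tail b c hvb hbc ihx =>
            have hbW' : b ∈ W' := by
              rcases Relation.ReflTransGen.cases_tail hvb with heq | _
              · exact heq ▸ hv
              · exact_mod_cast hbc.2.1
            have hcW' : c ∈ W' := by exact_mod_cast hbc.2.2
            refine ihx.tail ⟨hbc.1, ?_, ?_⟩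
            · exact notsep b hbW' (Rel.mono hW'coe hvb)
            · exact notsep c hcW' (Rel.mono hW'coe (hvb.tail hbc))
        exact mainrel u hrel
      have h1 := (hSep (comp v)).2.2 v hvC hvSep D hDsub
      have h2 : (comp v).card ≤ m := hcomp v hvW (comp v) (fun u hu => (hmemcomp v u).1 hu)
      exact le_trans h1 (Nat.div_le_div_right h2)
    obtain ⟨F', hP1', hchain', hedge'⟩ := ih (m / 2) (by omega) W' hcomp'
    set e := Fintype.equivFin V with he
    refine ⟨⟨fun u v => u = v
        ∨ (u ∈ S ∧ v ∈ W ∧ Rel G ↑W u v ∧ (v ∈ S → e u < e v))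
        ∨ (u ∉ S ∧ v ∉ S ∧ F'.anc u v), fun v => Or.inl rfl, ?_, ?_, ?_⟩, ?_, ?_, ?_⟩
    · -- antisymm
      intro u v h1 h2
      rcases h1 with rfl | ⟨huS, hvW, hrel, hord⟩ | ⟨huS, hvS, hF⟩
      · rfl
      · rcases h2 with rfl | ⟨hvS2, huW2, hrel2, hord2⟩ | ⟨hv2, hu2, hF2⟩
        · rfl
        · exact absurd (hord hvS2) (lt_asymm (hord2 huS))
        · exact absurd huS hu2
      · rcases h2 with rfl | ⟨hvS2, huW2, hrel2, hord2⟩ | ⟨hv2, hu2, hF2⟩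
        · rfl
        · exact absurd hvS2 hvS
        · exact F'.antisymm u v hF hF2
    · -- trans
      intro u v x h1 h2
      rcases h1 with rfl | ⟨huS, hvW, hrel, hord⟩ | ⟨huS, hvS, hF⟩
      · exact h2
      · rcases h2 with rfl | ⟨hvS2, hxW, hrel2, hord2⟩ | ⟨hvS2, hxS, hF2⟩
        · exact Or.inr (Or.inl ⟨huS, hvW, hrel, hord⟩)
        · exact Or.inr (Or.inl ⟨huS, hxW, hrel.trans hrel2,
            fun hxS => lt_trans (hord hvS2) (hord2 hxS)⟩)
        · rcases hP1' v x hF2 with rfl | ⟨hvW', hxW', hrelvx⟩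
          · exact Or.inr (Or.inl ⟨huS, hvW, hrel, hord⟩)
          · exact Or.inr (Or.inl ⟨huS, hW'sub hxW',
              hrel.trans (Rel.mono hW'coe hrelvx),
              fun hxS => absurd hxS ((hW'mem x).1 hxW').2⟩)
      · rcases h2 with rfl | ⟨hvS2, hxW, hrel2, hord2⟩ | ⟨hvS2, hxS, hF2⟩
        · exact Or.inr (Or.inr ⟨huS, hvS, hF⟩)
        · exact absurd hvS2 hvS
        · exact Or.inr (Or.inr ⟨huS, hxS, F'.trans u v x hF hF2⟩)
    · -- upChain
      intro u v x h1 h2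
      rcases h1 with rfl | ⟨huS, hxW, hrelux, hordux⟩ | ⟨huS, hxS, hFux⟩
      · exact Or.inr h2
      · rcases h2 with rfl | ⟨hvS, hxW2, hrelvx, hordvx⟩ | ⟨hvS, hxS2, hFvx⟩
        · exact Or.inl (Or.inr (Or.inl ⟨huS, hxW, hrelux, hordux⟩))
        · have hrel_uv : Rel G ↑W u v := hrelux.trans (Rel.symm hrelvx)
          rcases lt_trichotomy (e u) (e v) with hlt | heq | hlt
          · exact Or.inl (Or.inr (Or.inl ⟨huS, hSsub hvS, hrel_uv, fun _ => hlt⟩))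
          · exact Or.inl (Or.inl (e.injective heq))
          · exact Or.inr (Or.inr (Or.inl ⟨hvS, hSsub huS, Rel.symm hrel_uv, fun _ => hlt⟩))
        · rcases hP1' v x hFvx with rfl | ⟨hvW', hxW', hrelvx⟩
          · exact Or.inl (Or.inr (Or.inl ⟨huS, hxW, hrelux, fun h => absurd h hvS⟩))
          · exact Or.inl (Or.inr (Or.inl ⟨huS, hW'sub hvW',
              hrelux.trans (Rel.symm (Rel.mono hW'coe hrelvx)),
              fun h => absurd h hvS⟩))
      · rcases h2 with rfl | ⟨hvS, hxW2, hrelvx, hordvx⟩ | ⟨hvS, hxS2, hFvx⟩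
        · exact Or.inl (Or.inr (Or.inr ⟨huS, hxS, hFux⟩))
        · rcases hP1' u x hFux with rfl | ⟨huW', hxW', hrelux⟩
          · exact Or.inr (Or.inr (Or.inl ⟨hvS, hxW2, hrelvx, fun h => absurd h huS⟩))
          · exact Or.inr (Or.inr (Or.inl ⟨hvS, hW'sub huW',
              hrelvx.trans (Rel.symm (Rel.mono hW'coe hrelux)),
              fun h => absurd h huS⟩))
        · rcases F'.upChain u v x hFux hFvx with h | h
          · exact Or.inl (Or.inr (Or.inr ⟨huS, hvS, h⟩))
          · exact Or.inr (Or.inr (Or.inr ⟨hvS, huS, h⟩))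
    · -- P1
      intro u v h
      rcases h with rfl | ⟨huS, hvW, hrel, hord⟩ | ⟨huS, hvS, hF⟩
      · exact Or.inl rfl
      · exact Or.inr ⟨hSsub huS, hvW, hrel⟩
      · rcases hP1' u v hF with rfl | ⟨h1, h2, h3⟩
        · exact Or.inl rfl
        · exact Or.inr ⟨hW'sub h1, hW'sub h2, Rel.mono hW'coe h3⟩
    · -- chains
      intro s hsW hchain
      set s1 := s.filter (fun x => x ∈ S) with hs1
      set s2 := s.filter (fun x => x ∉ S) with hs2
      have hcards : s1.card + s2.card = s.card :=
        Finset.card_filter_add_card_filter_not (p := fun x => x ∈ S)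
      have hb2 : s2.card ≤ (w + 1) * Nat.clog 2 (m / 2 + 1) := by
        apply hchain' s2
        · intro x hx
          have hx' := Finset.mem_filter.1 (by exact_mod_cast hx : x ∈ s2)
          have hxW : x ∈ W := hsW (by exact_mod_cast hx'.1)
          exact_mod_cast (hW'mem x).2 ⟨hxW, hx'.2⟩
        · intro a ha b hb
          have ha' := Finset.mem_filter.1 ha
          have hb' := Finset.mem_filter.1 hb
          rcases hchain a ha'.1 b hb'.1 with h | h
          · rcases h with rfl | ⟨haS, _, _, _⟩ | ⟨_, _, hF⟩
            · exact Or.inl (F'.refl a)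
            · exact absurd haS ha'.2
            · exact Or.inl hF
          · rcases h with heq | ⟨hbS, _, _, _⟩ | ⟨_, _, hF⟩
            · exact Or.inl (heq ▸ F'.refl b)
            · exact absurd hbS hb'.2
            · exact Or.inr hF
      have hb1 : s1.card ≤ w + 1 := by
        rcases Finset.eq_empty_or_nonempty s1 with hemp | ⟨v₁, hv₁⟩
        · simp [hemp]
        · have hv₁' := Finset.mem_filter.1 hv₁
          have hsub1 : s1 ⊆ Sep (comp v₁) := by
            intro u hu
            have hu' := Finset.mem_filter.1 hu
            have huSep : u ∈ Sep (comp u) := (Finset.mem_filter.1 hu'.2).2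
            have hcompeq : comp u = comp v₁ := by
              by_cases heq : u = v₁
              · rw [heq]
              · rcases hchain u hu'.1 v₁ hv₁'.1 with h | h
                · rcases h with heq2 | ⟨_, _, hrel, _⟩ | ⟨hnS, _, _⟩
                  · exact absurd heq2 heq
                  · exact hcompEq u v₁ hrel
                  · exact absurd hu'.2 hnS
                · rcases h with heq2 | ⟨_, _, hrel, _⟩ | ⟨_, hnS, _⟩
                  · exact absurd heq2.symm heq
                  · exact (hcompEq v₁ u hrel).symm
                  · exact absurd hu'.2 hnS
            rw [hcompeq] at huSep
            exact huSep
          exact le_trans (Finset.card_le_card hsub1) (hSep (comp v₁)).2.1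
      have harg : (m + 1 + 2 - 1) / 2 = m / 2 + 1 := by omega
      have hlog : Nat.clog 2 (m + 1) = Nat.clog 2 (m / 2 + 1) + 1 := by
        rw [Nat.clog_of_two_le (by norm_num) (by omega), harg]
      calc s.card = s1.card + s2.card := hcards.symm
        _ ≤ (w + 1) + (w + 1) * Nat.clog 2 (m / 2 + 1) := Nat.add_le_add hb1 hb2
        _ = (w + 1) * (Nat.clog 2 (m / 2 + 1) + 1) := by ring
        _ = (w + 1) * Nat.clog 2 (m + 1) := by rw [hlog]
    · -- edges
      intro u v hadj huW hvW
      have hrel : Rel G ↑W u v :=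
        Relation.ReflTransGen.single ⟨hadj, by exact_mod_cast huW, by exact_mod_cast hvW⟩
      by_cases huS : u ∈ S
      · by_cases hvS : v ∈ S
        · rcases lt_trichotomy (e u) (e v) with h | h | h
          · exact Or.inl (Or.inr (Or.inl ⟨huS, hvW, hrel, fun _ => h⟩))
          · exact absurd (e.injective h) hadj.ne
          · exact Or.inr (Or.inr (Or.inl ⟨hvS, huW, Rel.symm hrel, fun _ => h⟩))
        · exact Or.inl (Or.inr (Or.inl ⟨huS, hvW, hrel, fun h => absurd h hvS⟩))
      · by_cases hvS : v ∈ S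
        · exact Or.inr (Or.inr (Or.inl ⟨hvS, huW, Rel.symm hrel, fun h => absurd h huS⟩))
        · have hu' : u ∈ W' := (hW'mem u).2 ⟨huW, huS⟩
          have hv' : v ∈ W' := (hW'mem v).2 ⟨hvW, hvS⟩
          rcases hedge' u v hadj hu' hv' with h | h
          · exact Or.inl (Or.inr (Or.inr ⟨huS, hvS, h⟩))
          · exact Or.inr (Or.inr (Or.inr ⟨hvS, huS, h⟩))

end TDAux

/-- For every finite simple graph `G` with `n ≥ 1` vertices,
`td(G) ≤ (tw(G) + 1) · ⌈log₂ (n + 1)⌉`. -/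
theorem treeDepth_le_treeWidth_mul_log {V : Type*} [Fintype V] [Nonempty V]
    (G : SimpleGraph V) :
    treeDepth G ≤ (treeWidth G + 1) * Nat.clog 2 (Fintype.card V + 1) := by
  classical
  -- the set defining treeWidth is nonempty: the trivial decomposition
  have hne : ∃ w, ∃ (n : ℕ) (T : SimpleGraph (Fin n)) (B : Fin n → Finset V),
      IsTreeDecomposition G T B ∧ ∀ i, (B i).card ≤ w + 1 := by
    refine ⟨Fintype.card V - 1, 1, ⊥, fun _ => Finset.univ, ⟨⟨?_, ?_⟩, ?_, ?_, ?_⟩, ?_⟩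
    · exact ⟨fun a b => by rw [Subsingleton.elim a b]⟩
    · intro v c hc
      cases c with
      | nil => exact hc.ne_nil rfl
      | cons h _ => exact h.elim
    · exact fun v => ⟨0, Finset.mem_univ v⟩
    · exact fun u v _ => ⟨0, Finset.mem_univ u, Finset.mem_univ v⟩
    · intro v
      rw [SimpleGraph.connected_iff]
      refine ⟨fun a b => ?_, ⟨⟨0, Finset.mem_univ v⟩⟩⟩
      rw [Subtype.ext (Subsingleton.elim a.1 b.1)]
    · intro i
      have h1 : ((fun _ : Fin 1 => (Finset.univ : Finset V)) i).card = Fintype.card V :=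
        Finset.card_univ
      have h2 : 1 ≤ Fintype.card V := Fintype.card_pos
      omega
  obtain ⟨N, T, B, hTD, hB⟩ := Nat.sInf_mem hne
  have hcomp : ∀ v ∈ (Finset.univ : Finset V), ∀ D : Finset V,
      (∀ u ∈ D, u ∈ (Finset.univ : Finset V) ∧
        TDAux.Rel G ↑(Finset.univ : Finset V) v u) → D.card ≤ Fintype.card V := by
    intro v _ D _
    exact Finset.card_le_univ D
  obtain ⟨F, hP1, hchain, hedge⟩ :=
    TDAux.key hTD hB (Fintype.card V) Finset.univ hcomp
  apply Nat.sInf_le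
  refine ⟨F, ?_, ?_⟩
  · intro s hs
    exact hchain s (by simp) hs
  · intro u v huv
    exact ⟨G.ne_of_adj huv, hedge u v huv (Finset.mem_univ u) (Finset.mem_univ v)⟩
end
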